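/- Let T = (T₁, ..., T_k) : ℝ → ℝ^k with k ≥ 2 be the differentiable sufficient statistic of a strongly exponential distribution. Then there exist k distinct points x₁, ..., x_k ∈ ℝ such that the derivative vectors T'(x₁), ..., T'(x_k) are linearly independent in ℝ^k. -/

import Mathlib

open Submodule Module


/-- A sufficient statistic `T : ℝ → ℝ^k` is strongly exponential if whenever
`⟨T(x), θ⟩` is constant on a subset `U ⊆ ℝ`, either `U` has Lebesgue measure zero or
`θ = 0`. -/
def StronglyExponential {k : ℕ} (T : ℝ → Fin k → ℝ) : Prop :=
  ∀ (U : Set ℝ) (θ : Fin k → ℝ),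
    (∃ c : ℝ, ∀ x ∈ U, ∑ i, T x i * θ i = c) →
    MeasureTheory.volume U = 0 ∨ θ = 0

/-- For a differentiable strongly exponential sufficient statistic `T : ℝ → ℝ^k` with
`k ≥ 2`, there exist `k` distinct points `x₁, …, x_k` such that the derivative vectors
`T'(x₁), …, T'(x_k)` are linearly independent in `ℝ^k`. -/
theorem stronglyExponential_deriv_linearIndependent {k : ℕ} (hk : 2 ≤ k)
    (T : ℝ → Fin k → ℝ)
    (hdiff : ∀ i, Differentiable ℝ (fun x => T x i))
    (hse : StronglyExponential T) :
    ∃ x : Fin k → ℝ, Function.Injective x ∧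
      LinearIndependent ℝ (fun i : Fin k => fun j : Fin k =>
        deriv (fun t => T t j) (x i)) := by
  classical
  set f : ℝ → (Fin k → ℝ) := fun x j => deriv (fun t => T t j) x with hf
  -- Key: any θ annihilating all derivative vectors is zero
  have key : ∀ θ : Fin k → ℝ, (∀ x : ℝ, ∑ j, f x j * θ j = 0) → θ = 0 := by
    intro θ hθ
    set g : ℝ → ℝ := fun x => ∑ j, T x j * θ j with hg
    have hgd : ∀ x, HasDerivAt g (∑ j, f x j * θ j) x := fun x =>
      HasDerivAt.fun_sum fun j _ => ((hdiff j x).hasDerivAt.mul_const (θ j))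
    have hg0 : ∀ x, deriv g x = 0 := fun x => by rw [(hgd x).deriv]; exact hθ x
    have hconst := is_const_of_deriv_eq_zero (fun x => (hgd x).differentiableAt) hg0
    rcases hse Set.univ θ ⟨g 0, fun x _ => hconst x 0⟩ with h | h
    · simp [Real.volume_univ] at h
    · exact h
  -- span of derivative vectors is everything
  have hspan : span ℝ (Set.range f) = ⊤ := by
    by_contra h
    obtain ⟨φ, hφ0, hφ⟩ := Submodule.exists_dual_map_eq_bot_of_lt_top
      (lt_top_iff_ne_top.2 h) inferInstance
    have hvan : ∀ x : ℝ, φ (f x) = 0 := by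
      intro x
      have : φ (f x) ∈ (span ℝ (Set.range f)).map φ :=
        ⟨f x, subset_span ⟨x, rfl⟩, rfl⟩
      rw [hφ] at this
      simpa using this
    set θ : Fin k → ℝ := fun j => φ (Pi.single j 1) with hθdef
    have hφv : ∀ v : Fin k → ℝ, φ v = ∑ j, v j * θ j := by
      intro v
      conv_lhs => rw [pi_eq_sum_univ v]
      rw [map_sum]
      refine Finset.sum_congr rfl fun j _ => ?_
      rw [map_smul, smul_eq_mul]
      have hsingle : (fun j' => if j = j' then (1:ℝ) else 0) = Pi.single j 1 := by
        funext j'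
        simp [Pi.single_apply, eq_comm]
      rw [hsingle]
    have hθ0 : θ = 0 := key θ fun x => by rw [← hφv]; exact hvan x
    exact hφ0 (LinearMap.ext fun v => by rw [hφv, hθ0]; simp)
  obtain ⟨b, hbsub, hbspan, hbli⟩ := exists_linearIndependent ℝ (Set.range f)
  rw [hspan] at hbspan
  have hbfin : b.Finite := hbli.setFinite
  haveI := hbfin.fintype
  have hcard : Fintype.card b = k := by
    have h1 := finrank_span_set_eq_card hbli
    rw [hbspan, finrank_top, Module.finrank_fin_fun, Set.toFinset_card] at h1
    omega
  let e : Fin k ≃ b := (Fintype.equivFinOfCardEq hcard).symm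
  have hx : ∀ i : Fin k, ∃ t : ℝ, f t = (e i : Fin k → ℝ) := fun i => hbsub (e i).2
  choose x hxf using hx
  have hli : LinearIndependent ℝ (fun i => f (x i)) := by
    have heq : (fun i => f (x i)) = (fun i : b => (i : Fin k → ℝ)) ∘ e :=
      funext fun i => hxf i
    rw [heq]
    exact hbli.comp e e.injective
  exact ⟨x, fun i j hij => hli.injective (congrArg f hij), hli⟩
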